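/- Let f : ℝⁿ → ℝ be convex and differentiable with minimizer X⋆, and let 0 ≤ r < 3. Let X solve 0 = Ẍ + (r/t)Ẋ + ∇f(X) on [t₀,∞) for some t₀ > 0. Define E = t₀^{2r/3}(f(X(t₀)) − f⋆) + (r(3−r)/9) t₀^{2r/3−2}‖X(t₀)−X⋆‖² + (1/2) t₀^{2r/3−2}‖t₀Ẋ(t₀) + (2r/3)(X(t₀)−X⋆)‖². Then for all t ≥ t₀, f(X(t)) − f⋆ ≤ E / t^{2r/3}. -/

import Mathlib

open Filter MeasureTheory
open scoped RealInnerProductSpace Topology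

set_option maxHeartbeats 1000000 in
theorem agm_ode_rate_r_lt3
    {E : Type*} [NormedAddCommGroup E] [InnerProductSpace ℝ E] [CompleteSpace E]
    (f : E → ℝ) (g : E → E)
    (hgrad : ∀ x, HasGradientAt f (g x) x)
    (hconv : ∀ x y, 0 ≤ f x - f y - ⟪g y, x - y⟫)
    (r : ℝ) (hr0 : 0 ≤ r) (hr3 : r < 3)
    (t₀ : ℝ) (ht₀ : 0 < t₀)
    (X X' X'' : ℝ → E)
    (hX' : ∀ t ∈ Set.Ici t₀, HasDerivAt X (X' t) t)
    (hX'' : ∀ t ∈ Set.Ici t₀, HasDerivAt X' (X'' t) t)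
    (hODE : ∀ t ∈ Set.Ici t₀, X'' t + (r / t) • X' t + g (X t) = 0)
    (Xs : E) (hmin : ∀ x, f Xs ≤ f x) :
    ∀ t ≥ t₀,
      f (X t) - f Xs ≤
        (t₀ ^ (2 * r / 3) * (f (X t₀) - f Xs)
          + (r * (3 - r) / 9) * t₀ ^ (2 * r / 3 - 2) * ‖X t₀ - Xs‖ ^ 2
          + (1 / 2) * t₀ ^ (2 * r / 3 - 2)
            * ‖t₀ • X' t₀ + (2 * r / 3) • (X t₀ - Xs)‖ ^ 2)
        / t ^ (2 * r / 3) := by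
  intro t ht
  have hpos : ∀ s ∈ Set.Ici t₀, (0:ℝ) < s := fun s hs => lt_of_lt_of_le ht₀ hs
  set α : ℝ := 2 * r / 3 with hαdef
  have hα0 : 0 ≤ α := by positivity
  set c : ℝ := r * (3 - r) / 9 with hcdef
  have hc0 : 0 ≤ c := by rw [hcdef]; nlinarith
  set W : ℝ → E := fun s => s • X' s + α • (X s - Xs) with hWdef
  set V : ℝ → ℝ := fun s =>
    s ^ α * (f (X s) - f Xs) + c * s ^ (α - 2) * ‖X s - Xs‖ ^ 2
      + (1/2) * s ^ (α - 2) * ‖W s‖ ^ 2 with hVdef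
  -- derivative of W
  have hWd : ∀ s ∈ Set.Ici t₀,
      HasDerivAt W (((3 - r)/3) • X' s - s • g (X s)) s := by
    intro s hs
    have hs0 : (0:ℝ) < s := hpos s hs
    have h1 := (hasDerivAt_id s).smul (hX'' s hs)
    simp only [id_eq, one_smul] at h1
    have h2 : HasDerivAt (fun u : ℝ => α • (X u - Xs)) (α • X' s) s :=
      (((hX' s hs).sub_const Xs).const_smul α)
    have := h1.add h2
    refine this.congr_deriv ?_
    have hODEs := hODE s hs
    have hX''eq : X'' s = -((r / s) • X' s) - g (X s) := by
      have := hODEs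
      abel_nf at this ⊢
      linear_combination (norm := module) this
    rw [hX''eq]
    have hsr : s • ((r / s) • X' s) = r • X' s := by
      rw [smul_smul]
      congr 1
      field_simp
    rw [smul_sub, smul_neg, hsr]
    have hcoef : ((3 - r)/3 : ℝ) = 1 + α - r := by rw [hαdef]; ring
    rw [hcoef]
    module
  -- derivative of f ∘ X
  have hfX : ∀ s ∈ Set.Ici t₀,
      HasDerivAt (fun u => f (X u)) ⟪g (X s), X' s⟫ s := by
    intro s hs
    have := (hgrad (X s)).hasFDerivAt.comp_hasDerivAt s (hX' s hs)
    simp at this; exact this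
  -- derivative of V
  set D : ℝ → ℝ := fun s =>
    (α * s ^ (α - 1) * (f (X s) - f Xs) + s ^ α * ⟪g (X s), X' s⟫)
    + c * ((α - 2) * s ^ (α - 3) * ⟪X s - Xs, X s - Xs⟫
        + s ^ (α - 2) * (2 * ⟪X s - Xs, X' s⟫))
    + (1/2) * ((α - 2) * s ^ (α - 3) * ⟪W s, W s⟫
        + s ^ (α - 2) * (2 * ⟪W s, ((3 - r)/3) • X' s - s • g (X s)⟫)) with hDdef
  have hVd : ∀ s ∈ Set.Ici t₀, HasDerivAt V (D s) s := by
    intro s hs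
    have hs0 : (0:ℝ) < s := hpos s hs
    have hpα : HasDerivAt (fun u : ℝ => u ^ α) (α * s ^ (α - 1)) s :=
      Real.hasDerivAt_rpow_const (Or.inl hs0.ne')
    have hpα2 : HasDerivAt (fun u : ℝ => u ^ (α - 2)) ((α - 2) * s ^ (α - 2 - 1)) s :=
      Real.hasDerivAt_rpow_const (Or.inl hs0.ne')
    have he : α - 2 - 1 = α - 3 := by ring
    rw [he] at hpα2
    have hu : HasDerivAt (fun u => X u - Xs) (X' s) s := (hX' s hs).sub_const Xs
    have hnu : HasDerivAt (fun u => ⟪X u - Xs, X u - Xs⟫)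
        (2 * ⟪X s - Xs, X' s⟫) s := by
      have := (HasDerivAt.inner ℝ hu hu)
      refine this.congr_deriv ?_
      rw [real_inner_comm (X' s) (X s - Xs)]; ring
    have hnW : HasDerivAt (fun u => ⟪W u, W u⟫)
        (2 * ⟪W s, ((3 - r)/3) • X' s - s • g (X s)⟫) s := by
      have := (HasDerivAt.inner ℝ (hWd s hs) (hWd s hs))
      refine this.congr_deriv ?_
      rw [real_inner_comm (((3 - r)/3) • X' s - s • g (X s)) (W s)]; ring
    have h1 : HasDerivAt (fun u => u ^ α * (f (X u) - f Xs))
        (α * s ^ (α - 1) * (f (X s) - f Xs) + s ^ α * ⟪g (X s), X' s⟫) s := by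
      have := hpα.mul ((hfX s hs).sub_const (f Xs))
      exact this
    have h2 : HasDerivAt (fun u => c * u ^ (α - 2) * ⟪X u - Xs, X u - Xs⟫)
        (c * ((α - 2) * s ^ (α - 3) * ⟪X s - Xs, X s - Xs⟫
          + s ^ (α - 2) * (2 * ⟪X s - Xs, X' s⟫))) s := by
      have := ((hpα2.const_mul c).mul hnu)
      refine this.congr_deriv ?_
      ring
    have h3 : HasDerivAt (fun u => (1/2 : ℝ) * u ^ (α - 2) * ⟪W u, W u⟫)
        ((1/2) * ((α - 2) * s ^ (α - 3) * ⟪W s, W s⟫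
          + s ^ (α - 2) * (2 * ⟪W s, ((3 - r)/3) • X' s - s • g (X s)⟫))) s := by
      have := ((hpα2.const_mul (1/2 : ℝ)).mul hnW)
      refine this.congr_deriv ?_
      ring
    have hVeq : V = fun u => u ^ α * (f (X u) - f Xs)
        + c * u ^ (α - 2) * ⟪X u - Xs, X u - Xs⟫
        + (1/2 : ℝ) * u ^ (α - 2) * ⟪W u, W u⟫ := by
      funext u
      rw [hVdef]
      simp only [real_inner_self_eq_norm_sq]
    rw [hVeq, hDdef]
    exact (h1.add h2).add h3
  -- D is nonpositive
  have hD0 : ∀ s ∈ Set.Ici t₀, D s ≤ 0 := by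
    intro s hs
    have hs0 : (0:ℝ) < s := hpos s hs
    set u := X s - Xs with hu
    set v := X' s with hv
    set G := g (X s) with hG
    have hWs : W s = s • v + α • u := rfl
    have hconv' : f (X s) - f Xs ≤ ⟪u, G⟫ := by
      have := hconv Xs (X s)
      have h2 : ⟪G, Xs - X s⟫ = -⟪u, G⟫ := by
        rw [real_inner_comm, hu]
        rw [show Xs - X s = -(X s - Xs) by abel, inner_neg_left]
      rw [h2] at this
      linarith
    -- expand inner products
    have eWW : ⟪W s, W s⟫ = s * s * ⟪v, v⟫ + 2 * (α * s) * ⟪u, v⟫ + α * α * ⟪u, u⟫ := by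
      rw [hWs]
      simp only [inner_add_left, inner_add_right, real_inner_smul_left, real_inner_smul_right]
      rw [real_inner_comm v u]
      ring
    have eWW' : ⟪W s, ((3 - r)/3) • v - s • G⟫
        = s * ((3 - r)/3) * ⟪v, v⟫ + α * ((3 - r)/3) * ⟪u, v⟫
          - s * s * ⟪v, G⟫ - α * s * ⟪u, G⟫ := by
      rw [hWs]
      simp only [inner_sub_right, inner_add_left, real_inner_smul_left, real_inner_smul_right]
      ring
    have e1 : s ^ (α - 2) = s ^ (α - 3) * s := by
      conv_lhs => rw [show α - 2 = (α - 3) + 1 by ring]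
      rw [Real.rpow_add_one hs0.ne']
    have e2 : s ^ (α - 1) = s ^ (α - 3) * s * s := by
      conv_lhs => rw [show α - 1 = (α - 3) + 1 + 1 by ring]
      rw [Real.rpow_add_one hs0.ne', Real.rpow_add_one hs0.ne']
    have e3 : s ^ α = s ^ (α - 3) * s * s * s := by
      conv_lhs => rw [show α = (α - 3) + 1 + 1 + 1 by ring]
      rw [Real.rpow_add_one hs0.ne', Real.rpow_add_one hs0.ne', Real.rpow_add_one hs0.ne']
    have hgXv : ⟪G, v⟫ = ⟪v, G⟫ := real_inner_comm _ _
    have hkey : D s = s ^ (α - 3) *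
        ((2 * r / 3) * (s * s) * (f (X s) - f Xs - ⟪u, G⟫)
          - (2 * r * (3 - r) * (3 + r) / 27) * ⟪u, u⟫) := by
      rw [hDdef]
      simp only
      rw [eWW, eWW', e1, e2, e3, hgXv, hαdef, hcdef]
      ring
    rw [hkey]
    have h1 : (0:ℝ) ≤ s ^ (α - 3) := (Real.rpow_pos_of_pos hs0 _).le
    have h2 : (0:ℝ) ≤ ⟪u, u⟫ := real_inner_self_nonneg
    have h3 : f (X s) - f Xs - ⟪u, G⟫ ≤ 0 := by linarith
    have h4 : (0:ℝ) ≤ 2 * r * (3 - r) * (3 + r) / 27 := by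
      have : (0:ℝ) < 3 + r := by linarith
      have : (0:ℝ) < 3 - r := by linarith
      positivity
    have h5 : (0:ℝ) ≤ (2 * r / 3) * (s * s) := by positivity
    refine mul_nonpos_of_nonneg_of_nonpos h1 ?_
    nlinarith [mul_nonneg h4 h2, mul_nonpos_of_nonneg_of_nonpos h5 h3]
  -- V is antitone on Ici t₀
  have hanti : AntitoneOn V (Set.Ici t₀) := by
    apply antitoneOn_of_deriv_nonpos (convex_Ici t₀)
    · intro s hs
      exact (hVd s hs).continuousAt.continuousWithinAt
    · intro s hs
      exact (hVd s (interior_subset hs)).differentiableAt.differentiableWithinAt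
    · intro s hs
      rw [(hVd s (interior_subset hs)).deriv]
      exact hD0 s (interior_subset hs)
  have hVle : V t ≤ V t₀ := hanti (Set.self_mem_Ici) ht ht
  have htpos : (0:ℝ) < t := lt_of_lt_of_le ht₀ ht
  have htα : (0:ℝ) < t ^ α := Real.rpow_pos_of_pos htpos _
  have hlow : t ^ α * (f (X t) - f Xs) ≤ V t := by
    rw [hVdef]
    have h1 : (0:ℝ) ≤ c * t ^ (α - 2) * ‖X t - Xs‖ ^ 2 := by positivity
    have h2 : (0:ℝ) ≤ (1/2) * t ^ (α - 2) * ‖W t‖ ^ 2 := by positivity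
    simp only
    linarith
  have hfinal : f (X t) - f Xs ≤ V t₀ / t ^ α := by
    rw [le_div_iff₀ htα]
    calc (f (X t) - f Xs) * t ^ α = t ^ α * (f (X t) - f Xs) := mul_comm _ _
      _ ≤ V t := hlow
      _ ≤ V t₀ := hVle
  exact hfinal
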